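/- For the strong seed-bank urn chain with 0 < β < 1/4 and ε ∈ (0,1): if τ = τ(N) is geometric with parameter 1/N, independent of the chain, then there exist δ > 0 and N₀ such that for all N ≥ N₀ and all initial distributions μ on {0,...,N^β−1}, ‖P_μ(X_τ ∈ ·) − ν_N‖_TV ≤ N^{−(β+δ)}. -/

import Mathlib

open Matrix

/-- Transition kernel of the urn chain on `{0,...,M-1}` (with `M = N^β`). -/
def urnP (M : ℕ) (ε : ℝ) (i j : Fin M) : ℝ :=
  if i.val = 0 then
    (if j.val = 0 then 1 - ε else if j.val = M - 1 then ε else 0)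
  else if j.val + 1 = i.val then 1 else 0

/-- The urn chain as a transition matrix. -/
def urnMat (M : ℕ) (ε : ℝ) : Matrix (Fin M) (Fin M) ℝ := Matrix.of (urnP M ε)

/-- The stationary distribution `ν_N` of the urn chain. -/
noncomputable def urnNu (M : ℕ) (ε : ℝ) (k : Fin M) : ℝ :=
  ((if k.val + 1 ≤ 1 then 1 - ε else 0) + (if k.val + 1 ≤ M then ε else 0)) /
    (1 + ε * (M - 1))

/-- Total variation distance between two probability vectors on a finite state space. -/
noncomputable def tvDist {S : Type*} [Fintype S] (f g : S → ℝ) : ℝ :=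
  (∑ s, |f s - g s|) / 2


lemma urnMat_apply {M : ℕ} {ε : ℝ} (i j : Fin M) : urnMat M ε i j = urnP M ε i j := rfl

lemma urnP_nonneg {M : ℕ} {ε : ℝ} (hε : ε ∈ Set.Ioo (0:ℝ) 1) (i j : Fin M) :
    0 ≤ urnP M ε i j := by
  unfold urnP; split_ifs <;> linarith [hε.1, hε.2]

lemma urnP_row_sum {M : ℕ} {ε : ℝ} (hM : 2 ≤ M) (i : Fin M) :
    ∑ j, urnP M ε i j = 1 := by
  have h0 : (0:ℕ) < M := by omega
  have hw : M - 1 < M := by omega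
  set z : Fin M := ⟨0, h0⟩ with hz
  set w : Fin M := ⟨M - 1, hw⟩ with hwdef
  have hzw : z ≠ w := by simp [hz, hwdef, Fin.ext_iff]; omega
  rcases eq_or_ne i.val 0 with h | h
  · have e : ∀ j : Fin M, urnP M ε i j
        = (if j = z then 1 - ε else 0) + (if j = w then ε else 0) := by
      intro j
      unfold urnP
      rw [if_pos h]
      rcases eq_or_ne j.val 0 with hj | hj
      · have hjz : j = z := by simp [hz, Fin.ext_iff, hj]
        rw [if_pos hj, if_pos hjz, if_neg (hjz ▸ hzw), add_zero]
      · have hjz : j ≠ z := by simp [hz, Fin.ext_iff]; omega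
        rw [if_neg hj, if_neg hjz, zero_add]
        rcases eq_or_ne j.val (M-1) with hj2 | hj2
        · have : j = w := by simp [hwdef, Fin.ext_iff, hj2]
          rw [if_pos hj2, if_pos this]
        · have : j ≠ w := by simp [hwdef, Fin.ext_iff]; omega
          rw [if_neg hj2, if_neg this]
    rw [Finset.sum_congr rfl (fun j _ => e j), Finset.sum_add_distrib]
    simp
  · have hi1 : i.val - 1 < M := Nat.lt_of_le_of_lt (Nat.sub_le _ _) i.isLt
    have e : ∀ j : Fin M, urnP M ε i j
        = (if j = (⟨i.val - 1, hi1⟩ : Fin M) then (1:ℝ) else 0) := by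
      intro j
      unfold urnP
      rw [if_neg h]
      have : (j.val + 1 = i.val) ↔ (j = (⟨i.val - 1, hi1⟩ : Fin M)) := by
        rw [Fin.ext_iff]; simp; omega
      rw [if_congr this rfl rfl]
    rw [Finset.sum_congr rfl (fun j _ => e j)]
    simp

lemma urnMat_row_sum {M : ℕ} {ε : ℝ} (hM : 2 ≤ M) (i : Fin M) :
    ∑ j, urnMat M ε i j = 1 := urnP_row_sum hM i

lemma urnPow_nonneg {M : ℕ} {ε : ℝ} (hε : ε ∈ Set.Ioo (0:ℝ) 1) (k : ℕ) (i j : Fin M) :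
    0 ≤ (urnMat M ε ^ k) i j := by
  induction k generalizing i j with
  | zero => rw [pow_zero, Matrix.one_apply]; split_ifs <;> norm_num
  | succ n ih =>
    rw [pow_succ, Matrix.mul_apply]
    exact Finset.sum_nonneg fun t _ => mul_nonneg (ih i t) (urnP_nonneg hε t j)

lemma urnPow_row_sum {M : ℕ} {ε : ℝ} (hM : 2 ≤ M) (k : ℕ) (i : Fin M) :
    ∑ j, (urnMat M ε ^ k) i j = 1 := by
  induction k generalizing i with
  | zero => simp [Matrix.one_apply]
  | succ n ih =>
    simp only [pow_succ, Matrix.mul_apply]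
    rw [Finset.sum_comm]
    have e : ∀ t : Fin M, ∑ j, (urnMat M ε ^ n) i t * urnMat M ε t j
        = (urnMat M ε ^ n) i t := by
      intro t; rw [← Finset.mul_sum, urnMat_row_sum hM t, mul_one]
    rw [Finset.sum_congr rfl (fun t _ => e t)]
    exact ih i

lemma urnPow_le_one {M : ℕ} {ε : ℝ} (hM : 2 ≤ M) (hε : ε ∈ Set.Ioo (0:ℝ) 1)
    (k : ℕ) (i j : Fin M) : (urnMat M ε ^ k) i j ≤ 1 := by
  calc (urnMat M ε ^ k) i j ≤ ∑ j', (urnMat M ε ^ k) i j' :=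
        Finset.single_le_sum (fun t _ => urnPow_nonneg hε k i t) (Finset.mem_univ j)
    _ = 1 := urnPow_row_sum hM k i

lemma urnPow_shift {M : ℕ} {ε : ℝ} (k : ℕ) (i : Fin M) (hi : i.val ≠ 0) (j : Fin M) :
    (urnMat M ε ^ (k+1)) i j
      = (urnMat M ε ^ k) ⟨i.val - 1, Nat.lt_of_le_of_lt (Nat.sub_le _ _) i.isLt⟩ j := by
  set i' : Fin M := ⟨i.val - 1, Nat.lt_of_le_of_lt (Nat.sub_le _ _) i.isLt⟩ with hi'
  rw [pow_succ', Matrix.mul_apply]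
  have e : ∀ t : Fin M, urnMat M ε i t * (urnMat M ε ^ k) t j
      = (if t = i' then (urnMat M ε ^ k) t j else 0) := by
    intro t
    have h1 : urnMat M ε i t = if t = i' then 1 else 0 := by
      rw [urnMat_apply]; unfold urnP
      rw [if_neg hi]
      have h2 : (t.val + 1 = i.val) ↔ (t = i') := by
        rw [Fin.ext_iff, hi']; simp; omega
      rw [if_congr h2 rfl rfl]
    rw [h1]; split_ifs <;> simp
  rw [Finset.sum_congr rfl (fun t _ => e t), Finset.sum_ite_eq']
  simp

lemma urnPow_desc {M : ℕ} {ε : ℝ} (h0 : 0 < M) (m : ℕ) : ∀ (k : ℕ) (i : Fin M),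
    i.val = m → ∀ j, (urnMat M ε ^ (m + k)) i j = (urnMat M ε ^ k) ⟨0, h0⟩ j := by
  induction m with
  | zero =>
    intro k i hi j
    have : i = (⟨0, h0⟩ : Fin M) := by simp only [Fin.ext_iff]; exact hi
    rw [zero_add, this]
  | succ n ih =>
    intro k i hi j
    have h1 : n + 1 + k = (n + k) + 1 := by omega
    rw [h1, urnPow_shift (n+k) i (by omega)]
    exact ih k ⟨i.val - 1, _⟩ (by simp [hi]) j

section
variable {M : ℕ} {ε : ℝ}

lemma urnD_pos (hM : 2 ≤ M) (hε : ε ∈ Set.Ioo (0:ℝ) 1) : 0 < 1 + ε * ((M:ℝ) - 1) := by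
  have : (1:ℝ) ≤ (M:ℝ) - 1 := by
    have : (2:ℝ) ≤ (M:ℝ) := by exact_mod_cast hM
    linarith
  nlinarith [hε.1]

lemma urnNu_zero (hM : 2 ≤ M) : urnNu M ε ⟨0, by omega⟩ = 1 / (1 + ε * ((M:ℝ) - 1)) := by
  unfold urnNu
  simp only [Fin.val_mk]
  rw [if_pos (by omega), if_pos (by omega)]
  ring_nf

lemma urnNu_pos_val (k : Fin M) (hk : k.val ≠ 0) :
    urnNu M ε k = ε / (1 + ε * ((M:ℝ) - 1)) := by
  unfold urnNu
  rw [if_neg (by omega), if_pos (by have := k.isLt; omega), zero_add]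

lemma urnNu_nonneg (hM : 2 ≤ M) (hε : ε ∈ Set.Ioo (0:ℝ) 1) (k : Fin M) :
    0 ≤ urnNu M ε k := by
  rcases eq_or_ne k.val 0 with h | h
  · have : k = (⟨0, by omega⟩ : Fin M) := by simp [Fin.ext_iff, h]
    rw [this, urnNu_zero hM]
    exact (one_div_pos.mpr (urnD_pos hM hε)).le
  · rw [urnNu_pos_val k h]
    exact (div_pos hε.1 (urnD_pos hM hε)).le

lemma urnNu_sum (hM : 2 ≤ M) (hε : ε ∈ Set.Ioo (0:ℝ) 1) : ∑ k, urnNu M ε k = 1 := by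
  have hD := urnD_pos hM hε
  set D := 1 + ε * ((M:ℝ) - 1) with hDdef
  have h0 : (0:ℕ) < M := by omega
  set z : Fin M := ⟨0, h0⟩ with hz
  have e : ∀ k : Fin M, urnNu M ε k = (if k = z then (1-ε)/D else 0) + ε/D := by
    intro k
    rcases eq_or_ne k.val 0 with h | h
    · have hkz : k = z := by simp [hz, Fin.ext_iff, h]
      rw [hkz, if_pos rfl, urnNu_zero hM, ← hDdef]
      field_simp
      ring
    · have hkz : k ≠ z := by simp [hz, Fin.ext_iff]; omega
      rw [if_neg hkz, urnNu_pos_val k h, ← hDdef, zero_add]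
  rw [Finset.sum_congr rfl (fun k _ => e k), Finset.sum_add_distrib]
  rw [Finset.sum_ite_eq' Finset.univ z, if_pos (Finset.mem_univ z)]
  rw [Finset.sum_const, Finset.card_univ, Fintype.card_fin]
  field_simp
  rw [nsmul_eq_mul, show D * (↑M * (ε / D)) = ↑M * ε by
    rw [mul_comm, mul_assoc, div_mul_cancel₀ ε hD.ne'], hDdef]; ring

lemma urnNu_stat (hM : 2 ≤ M) (hε : ε ∈ Set.Ioo (0:ℝ) 1) (s : Fin M) :
    ∑ i, urnNu M ε i * urnMat M ε i s = urnNu M ε s := by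
  have hD := urnD_pos hM hε
  set D := 1 + ε * ((M:ℝ) - 1) with hDdef
  have h0 : (0:ℕ) < M := by omega
  set z : Fin M := ⟨0, h0⟩ with hz
  have hνz : urnNu M ε z = 1/D := urnNu_zero hM
  have hνp : ∀ k : Fin M, k.val ≠ 0 → urnNu M ε k = ε/D := fun k hk => urnNu_pos_val k hk
  rcases eq_or_ne s.val 0 with hs | hs
  · -- s = z
    have hsz : s = z := by simp [hz, Fin.ext_iff, hs]
    have h1M : (1:ℕ) < M := by omega
    set o : Fin M := ⟨1, h1M⟩ with ho
    have hzo : z ≠ o := by simp [hz, ho, Fin.ext_iff]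
    have e : ∀ i : Fin M, urnNu M ε i * urnMat M ε i s
        = (if i = z then (1-ε)/D else 0) + (if i = o then ε/D else 0) := by
      intro i
      rcases eq_or_ne i.val 0 with h | h
      · have hiz : i = z := by simp [hz, Fin.ext_iff, h]
        rw [hiz, if_pos rfl, if_neg hzo, add_zero, hνz]
        show (1/D) * urnP M ε z s = _
        unfold urnP
        rw [if_pos (by simp [hz]), if_pos (by simp [hsz, hz])]
        ring
      · have hiz : i ≠ z := by simp [hz, Fin.ext_iff]; omega
        rw [if_neg hiz, zero_add, hνp i h]
        show (ε/D) * urnP M ε i s = _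
        unfold urnP
        rw [if_neg h]
        rcases eq_or_ne i o with hio | hio
        · rw [if_pos hio, if_pos (by simp [hio, ho, hsz, hz])]
          ring
        · have hio' : i.val ≠ 1 := by
            intro hc; exact hio (Fin.ext (by rw [hc]))
          rw [if_neg hio, if_neg (by omega), mul_zero]
    rw [Finset.sum_congr rfl (fun i _ => e i), Finset.sum_add_distrib]
    rw [Finset.sum_ite_eq' Finset.univ z, Finset.sum_ite_eq' Finset.univ o]
    rw [if_pos (Finset.mem_univ z), if_pos (Finset.mem_univ o), hsz, hνz]
    field_simp
    ring
  · rcases eq_or_ne s.val (M - 1) with hs2 | hs2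
    · -- s = M-1 : only i = z contributes, with ε
      have e : ∀ i : Fin M, urnNu M ε i * urnMat M ε i s
          = (if i = z then ε/D else 0) := by
        intro i
        rcases eq_or_ne i.val 0 with h | h
        · have hiz : i = z := by simp [hz, Fin.ext_iff, h]
          rw [hiz, if_pos rfl, hνz]
          show (1/D) * urnP M ε z s = _
          unfold urnP
          rw [if_pos (by simp [hz]), if_neg (by omega), if_pos hs2]
          ring
        · have hiz : i ≠ z := by simp [hz, Fin.ext_iff]; omega
          rw [if_neg hiz, hνp i h]
          show (ε/D) * urnP M ε i s = _
          unfold urnP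
          rw [if_neg h, if_neg (by have := i.isLt; omega), mul_zero]
      rw [Finset.sum_congr rfl (fun i _ => e i)]
      rw [Finset.sum_ite_eq' Finset.univ z, if_pos (Finset.mem_univ z)]
      rw [urnNu_pos_val s hs]
    · -- interior: only i = s+1 contributes
      have hlt : s.val + 1 < M := by have := s.isLt; omega
      set t : Fin M := ⟨s.val + 1, hlt⟩ with ht
      have e : ∀ i : Fin M, urnNu M ε i * urnMat M ε i s
          = (if i = t then ε/D else 0) := by
        intro i
        rcases eq_or_ne i.val 0 with h | h
        · have hit : i ≠ t := by simp [ht, Fin.ext_iff]; omega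
          rw [if_neg hit]
          have hiz : i = z := by simp [hz, Fin.ext_iff, h]
          rw [hiz, hνz]
          show (1/D) * urnP M ε z s = _
          unfold urnP
          rw [if_pos (by simp [hz]), if_neg hs, if_neg hs2, mul_zero]
        · rw [hνp i h]
          show (ε/D) * urnP M ε i s = _
          unfold urnP
          rw [if_neg h]
          rcases eq_or_ne i t with hit | hit
          · rw [if_pos hit, if_pos (by simp [hit, ht]), mul_one]
          · have hit' : i.val ≠ s.val + 1 := by
              intro hc; exact hit (Fin.ext (by rw [hc]))
            rw [if_neg hit, if_neg (by omega), mul_zero]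
      rw [Finset.sum_congr rfl (fun i _ => e i)]
      rw [Finset.sum_ite_eq' Finset.univ t, if_pos (Finset.mem_univ t)]
      rw [urnNu_pos_val s hs]

lemma urnNu_stat_pow (hM : 2 ≤ M) (hε : ε ∈ Set.Ioo (0:ℝ) 1) (k : ℕ) (s : Fin M) :
    ∑ i, urnNu M ε i * (urnMat M ε ^ k) i s = urnNu M ε s := by
  induction k generalizing s with
  | zero =>
    simp only [pow_zero, Matrix.one_apply, mul_ite, mul_one, mul_zero]
    rw [Finset.sum_ite_eq' Finset.univ s, if_pos (Finset.mem_univ s)]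
  | succ n ih =>
    simp only [pow_succ, Matrix.mul_apply, Finset.mul_sum]
    rw [Finset.sum_comm]
    have e : ∀ t : Fin M, ∑ i, urnNu M ε i * ((urnMat M ε ^ n) i t * urnMat M ε t s)
        = urnNu M ε t * urnMat M ε t s := by
      intro t
      rw [Finset.sum_congr rfl (fun i _ => (mul_assoc _ _ _).symm), ← Finset.sum_mul, ih t]
    rw [Finset.sum_congr rfl (fun t _ => e t)]
    exact urnNu_stat hM hε s

end

section
variable {M : ℕ} {ε p : ℝ}

lemma summable_geom_w (hp : 0 < p) (hp1 : p < 1) :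
    Summable (fun k : ℕ => (1 - p) ^ k * p) :=
  (summable_geometric_of_lt_one (by linarith) (by linarith)).mul_right p

lemma tsum_geom_w (hp : 0 < p) (hp1 : p < 1) :
    ∑' k : ℕ, (1 - p) ^ k * p = 1 := by
  rw [tsum_mul_right, tsum_geometric_of_lt_one (by linarith) (by linarith)]
  field_simp
  rw [sub_sub_cancel, div_self hp.ne']

lemma summable_term (hM : 2 ≤ M) (hε : ε ∈ Set.Ioo (0:ℝ) 1) (hp : 0 < p) (hp1 : p < 1)
    (i s : Fin M) :
    Summable (fun k : ℕ => (1 - p) ^ k * p * (urnMat M ε ^ (k + 1)) i s) := by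
  apply Summable.of_nonneg_of_le
    (fun k => mul_nonneg (mul_nonneg (pow_nonneg (by linarith) k) hp.le)
      (urnPow_nonneg hε (k+1) i s))
    (fun k => ?_) (summable_geom_w hp hp1)
  calc (1 - p) ^ k * p * (urnMat M ε ^ (k + 1)) i s
      ≤ (1 - p) ^ k * p * 1 := by
        apply mul_le_mul_of_nonneg_left (urnPow_le_one hM hε (k+1) i s)
        exact mul_nonneg (pow_nonneg (by linarith) k) hp.le
    _ = (1 - p) ^ k * p := mul_one _

/-- geometric-time law started from `i` -/
noncomputable def urnF (M : ℕ) (ε p : ℝ) (i s : Fin M) : ℝ :=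
  ∑' k : ℕ, (1 - p) ^ k * p * (urnMat M ε ^ (k + 1)) i s

lemma urnF_nonneg (hε : ε ∈ Set.Ioo (0:ℝ) 1) (hp : 0 < p) (hp1 : p < 1) (i s : Fin M) :
    0 ≤ urnF M ε p i s :=
  tsum_nonneg fun k => mul_nonneg (mul_nonneg (pow_nonneg (by linarith) k) hp.le)
    (urnPow_nonneg hε (k+1) i s)

lemma urnF_sum (hM : 2 ≤ M) (hε : ε ∈ Set.Ioo (0:ℝ) 1) (hp : 0 < p) (hp1 : p < 1)
    (i : Fin M) : ∑ s, urnF M ε p i s = 1 := by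
  unfold urnF
  rw [← Summable.tsum_finsetSum (fun s _ => summable_term hM hε hp hp1 i s)]
  have e : ∀ k : ℕ, ∑ s, (1 - p) ^ k * p * (urnMat M ε ^ (k + 1)) i s
      = (1 - p) ^ k * p := by
    intro k
    rw [← Finset.mul_sum, urnPow_row_sum hM (k+1) i, mul_one]
  rw [tsum_congr e, tsum_geom_w hp hp1]

lemma urnF_split (hM : 2 ≤ M) (hε : ε ∈ Set.Ioo (0:ℝ) 1) (hp : 0 < p) (hp1 : p < 1)
    (i s : Fin M) :
    urnF M ε p i s
      = (∑ k ∈ Finset.range i.val, (1 - p) ^ k * p * (urnMat M ε ^ (k + 1)) i s)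
        + (1 - p) ^ i.val * urnF M ε p ⟨0, by omega⟩ s := by
  unfold urnF
  rw [← Summable.sum_add_tsum_nat_add i.val (summable_term hM hε hp hp1 i s)]
  congr 1
  have e : ∀ k : ℕ, (1 - p) ^ (k + i.val) * p * (urnMat M ε ^ (k + i.val + 1)) i s
      = (1 - p) ^ i.val * ((1 - p) ^ k * p * (urnMat M ε ^ (k + 1)) ⟨0, by omega⟩ s) := by
    intro k
    have h1 : k + i.val + 1 = i.val + (k + 1) := by omega
    rw [h1, urnPow_desc (by omega) i.val (k+1) i rfl s, pow_add]
    ring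
  rw [tsum_congr e, tsum_mul_left]

lemma urnF_row_dist (hM : 2 ≤ M) (hε : ε ∈ Set.Ioo (0:ℝ) 1) (hp : 0 < p) (hp1 : p < 1)
    (i : Fin M) :
    ∑ s, |urnF M ε p i s - urnF M ε p ⟨0, by omega⟩ s| ≤ 2 * M * p := by
  set z : Fin M := ⟨0, by omega⟩ with hz
  set m := i.val with hm
  have h1p0 : (0:ℝ) ≤ 1 - p := by linarith
  have h1p1 : (1:ℝ) - p < 1 := by linarith
  have hgm : ∑ k ∈ Finset.range m, (1 - p) ^ k * p = 1 - (1 - p) ^ m := by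
    rw [← Finset.sum_mul, geom_sum_eq (by intro h; rw [sub_eq_iff_eq_add] at h; simp at h; linarith) m]
    have hpne : p ≠ 0 := hp.ne'
    have h3 : (1 - p - 1) = -p := by ring
    rw [h3, div_neg, neg_mul, div_mul_cancel₀ _ hpne]
    ring
  have hc0 : 0 ≤ 1 - (1 - p) ^ m := by
    have : (1 - p) ^ m ≤ 1 := pow_le_one₀ h1p0 (by linarith)
    linarith
  have key : ∀ s, |urnF M ε p i s - urnF M ε p z s|
      ≤ (∑ k ∈ Finset.range m, (1 - p) ^ k * p * (urnMat M ε ^ (k + 1)) i s)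
        + (1 - (1 - p) ^ m) * urnF M ε p z s := by
    intro s
    have hsplit := urnF_split hM hε hp hp1 i s
    rw [← hz] at hsplit
    have : urnF M ε p i s - urnF M ε p z s
        = (∑ k ∈ Finset.range m, (1 - p) ^ k * p * (urnMat M ε ^ (k + 1)) i s)
          - (1 - (1 - p) ^ m) * urnF M ε p z s := by
      rw [hsplit]; ring
    rw [this]
    have ha : 0 ≤ ∑ k ∈ Finset.range m, (1 - p) ^ k * p * (urnMat M ε ^ (k + 1)) i s :=
      Finset.sum_nonneg fun k _ => mul_nonneg (mul_nonneg (pow_nonneg h1p0 k) hp.le)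
        (urnPow_nonneg hε (k+1) i s)
    have hb : 0 ≤ (1 - (1 - p) ^ m) * urnF M ε p z s :=
      mul_nonneg hc0 (urnF_nonneg hε hp hp1 z s)
    calc |_ - _| ≤ |∑ k ∈ Finset.range m, (1 - p) ^ k * p * (urnMat M ε ^ (k + 1)) i s|
          + |(1 - (1 - p) ^ m) * urnF M ε p z s| := abs_sub _ _
      _ = _ + _ := by rw [abs_of_nonneg ha, abs_of_nonneg hb]
  calc ∑ s, |urnF M ε p i s - urnF M ε p z s|
      ≤ ∑ s, ((∑ k ∈ Finset.range m, (1 - p) ^ k * p * (urnMat M ε ^ (k + 1)) i s)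
          + (1 - (1 - p) ^ m) * urnF M ε p z s) :=
        Finset.sum_le_sum fun s _ => key s
    _ = (∑ k ∈ Finset.range m, (1 - p) ^ k * p) + (1 - (1 - p) ^ m) := by
        rw [Finset.sum_add_distrib, Finset.sum_comm]
        congr 1
        · apply Finset.sum_congr rfl
          intro k _
          rw [← Finset.mul_sum, urnPow_row_sum hM (k+1) i, mul_one]
        · rw [← Finset.mul_sum, urnF_sum hM hε hp hp1 z, mul_one]
    _ = 2 * (1 - (1 - p) ^ m) := by rw [hgm]; ring
    _ ≤ 2 * (m * p) := by
        have := one_add_mul_le_pow (a := -p) (by linarith) m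
        have h2 : 1 - m * p ≤ (1 - p) ^ m := by
          have : 1 + m * (-p) ≤ (1 + (-p)) ^ m := this
          simpa [sub_eq_add_neg, mul_neg] using this
        nlinarith
    _ ≤ 2 * M * p := by
        have : (m:ℝ) ≤ M := by exact_mod_cast (le_of_lt i.isLt)
        nlinarith
end

lemma urn_main {M : ℕ} {ε p : ℝ} (hM : 2 ≤ M) (hε : ε ∈ Set.Ioo (0:ℝ) 1)
    (hp : 0 < p) (hp1 : p < 1)
    (μ : Fin M → ℝ) (hμ0 : ∀ i, 0 ≤ μ i) (hμ1 : ∑ i, μ i = 1) :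
    ∑ s, |(∑' k : ℕ, (1 - p) ^ k * p * (∑ i, μ i * (urnMat M ε ^ (k+1)) i s))
        - urnNu M ε s| ≤ 4 * M * p := by
  set z : Fin M := ⟨0, by omega⟩ with hz
  have hF : ∀ s, (∑' k:ℕ, (1-p)^k * p * (∑ i, μ i * (urnMat M ε ^ (k+1)) i s))
      = ∑ i, μ i * urnF M ε p i s := by
    intro s
    have e : ∀ k:ℕ, (1-p)^k * p * (∑ i, μ i * (urnMat M ε ^ (k+1)) i s)
        = ∑ i, μ i * ((1-p)^k * p * (urnMat M ε ^ (k+1)) i s) := by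
      intro k; rw [Finset.mul_sum]; exact Finset.sum_congr rfl fun i _ => by ring
    rw [tsum_congr e, Summable.tsum_finsetSum (fun i _ => ((summable_term hM hε hp hp1 i s).mul_left (μ i)))]
    exact Finset.sum_congr rfl fun i _ => tsum_mul_left
  have hN : ∀ s, urnNu M ε s = ∑ i, urnNu M ε i * urnF M ε p i s := by
    intro s
    have e : ∀ k:ℕ, (1-p)^k * p * urnNu M ε s
        = ∑ i, urnNu M ε i * ((1-p)^k * p * (urnMat M ε ^ (k+1)) i s) := by
      intro k
      rw [← urnNu_stat_pow hM hε (k+1) s, Finset.mul_sum]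
      exact Finset.sum_congr rfl fun i _ => by ring
    calc urnNu M ε s = (∑' k:ℕ, (1-p)^k * p) * urnNu M ε s := by
          rw [tsum_geom_w hp hp1, one_mul]
      _ = ∑' k:ℕ, (1-p)^k * p * urnNu M ε s := tsum_mul_right.symm
      _ = ∑' k:ℕ, ∑ i, urnNu M ε i * ((1-p)^k * p * (urnMat M ε ^ (k+1)) i s) :=
          tsum_congr e
      _ = ∑ i, ∑' k:ℕ, urnNu M ε i * ((1-p)^k * p * (urnMat M ε ^ (k+1)) i s) :=
          Summable.tsum_finsetSum (fun i _ => ((summable_term hM hε hp hp1 i s).mul_left (urnNu M ε i)))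
      _ = ∑ i, urnNu M ε i * urnF M ε p i s :=
          Finset.sum_congr rfl fun i _ => tsum_mul_left
  have hzero : ∑ i, (μ i - urnNu M ε i) = 0 := by
    rw [Finset.sum_sub_distrib, hμ1, urnNu_sum hM hε, sub_self]
  have hdiff : ∀ s, (∑' k:ℕ, (1-p)^k * p * (∑ i, μ i * (urnMat M ε ^ (k+1)) i s))
      - urnNu M ε s
      = ∑ i, (μ i - urnNu M ε i) * (urnF M ε p i s - urnF M ε p z s) := by
    intro s
    have e2 : ∑ i, (μ i - urnNu M ε i) * (urnF M ε p i s - urnF M ε p z s)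
        = ((∑ i, μ i * urnF M ε p i s) - (∑ i, urnNu M ε i * urnF M ε p i s))
          - (∑ i, (μ i - urnNu M ε i)) * urnF M ε p z s := by
      rw [Finset.sum_mul, ← Finset.sum_sub_distrib, ← Finset.sum_sub_distrib]
      exact Finset.sum_congr rfl fun i _ => by ring
    rw [hF s, hN s, e2, hzero, zero_mul, sub_zero]
  calc ∑ s, |(∑' k:ℕ, (1-p)^k * p * (∑ i, μ i * (urnMat M ε ^ (k+1)) i s)) - urnNu M ε s|
      = ∑ s, |∑ i, (μ i - urnNu M ε i) * (urnF M ε p i s - urnF M ε p z s)| := by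
        exact Finset.sum_congr rfl fun s _ => by rw [hdiff s]
    _ ≤ ∑ s, ∑ i, |μ i - urnNu M ε i| * |urnF M ε p i s - urnF M ε p z s| := by
        apply Finset.sum_le_sum
        intro s _
        calc |∑ i, (μ i - urnNu M ε i) * (urnF M ε p i s - urnF M ε p z s)|
            ≤ ∑ i, |(μ i - urnNu M ε i) * (urnF M ε p i s - urnF M ε p z s)| :=
              Finset.abs_sum_le_sum_abs _ _
          _ = ∑ i, |μ i - urnNu M ε i| * |urnF M ε p i s - urnF M ε p z s| :=
              Finset.sum_congr rfl fun i _ => abs_mul _ _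
    _ = ∑ i, |μ i - urnNu M ε i| * (∑ s, |urnF M ε p i s - urnF M ε p z s|) := by
        rw [Finset.sum_comm]
        exact Finset.sum_congr rfl fun i _ => (Finset.mul_sum _ _ _).symm
    _ ≤ ∑ i, |μ i - urnNu M ε i| * (2 * M * p) := by
        apply Finset.sum_le_sum
        intro i _
        exact mul_le_mul_of_nonneg_left (urnF_row_dist hM hε hp hp1 i) (abs_nonneg _)
    _ = (∑ i, |μ i - urnNu M ε i|) * (2 * M * p) := (Finset.sum_mul _ _ _).symm
    _ ≤ 2 * (2 * M * p) := by
        have h1 : ∑ i, |μ i - urnNu M ε i| ≤ 2 := by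
          calc ∑ i, |μ i - urnNu M ε i| ≤ ∑ i, (μ i + urnNu M ε i) := by
                apply Finset.sum_le_sum
                intro i _
                calc |μ i - urnNu M ε i| ≤ |μ i| + |urnNu M ε i| := abs_sub _ _
                  _ = μ i + urnNu M ε i := by
                    rw [abs_of_nonneg (hμ0 i), abs_of_nonneg (urnNu_nonneg hM hε i)]
            _ = 2 := by rw [Finset.sum_add_distrib, hμ1, urnNu_sum hM hε]; norm_num
        have h2 : (0:ℝ) ≤ 2 * M * p := by positivity
        exact mul_le_mul_of_nonneg_right h1 h2
    _ = 4 * M * p := by ring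

/-- Mixing at an independent geometric time: for `0 < β < 1/4`, if `τ ∼ Geo(1/N)` on
`{1,2,...}` is independent of the urn chain, then there exist `δ > 0` and `N₀` such that for
all `N ≥ N₀` and all initial distributions `μ₀` on `{0,...,N^β-1}`,
`‖P_{μ₀}(X_τ ∈ ·) - ν_N‖_TV ≤ N^{-(β+δ)}`. The law of `X_τ` is
`∑_{k≥0} (1-1/N)^k (1/N) · μ₀ P^{k+1}`. -/
theorem urn_mixing_geometric_time (β ε : ℝ) (hβ : 0 < β) (hβ4 : β < 1 / 4)
    (hε : ε ∈ Set.Ioo (0:ℝ) 1) :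
    ∃ δ > (0:ℝ), ∃ N₀ : ℕ, ∀ N : ℕ, N₀ ≤ N →
      ∀ μ₀ : Fin ⌊(N : ℝ) ^ β⌋₊ → ℝ, (∀ i, 0 ≤ μ₀ i) → ∑ i, μ₀ i = 1 →
        tvDist
          (fun s => ∑' k : ℕ,
            (1 - 1 / (N : ℝ)) ^ k * (1 / (N : ℝ)) *
              (μ₀ ᵥ* (urnMat ⌊(N : ℝ) ^ β⌋₊ ε) ^ (k + 1)) s)
          (urnNu ⌊(N : ℝ) ^ β⌋₊ ε) ≤ (N : ℝ) ^ (-(β + δ)) := by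
  refine ⟨1/4, by norm_num, max 16 (⌈(2:ℝ)^((1:ℝ)/β)⌉₊ + 1), ?_⟩
  intro N hN μ₀ hμ0 hμ1
  have hN16 : (16:ℕ) ≤ N := le_trans (le_max_left _ _) hN
  have hN16' : (16:ℝ) ≤ (N:ℝ) := by exact_mod_cast hN16
  have hNpos : (0:ℝ) < (N:ℝ) := by linarith
  have hN1 : (1:ℝ) < (N:ℝ) := by linarith
  have hceil : (⌈(2:ℝ)^((1:ℝ)/β)⌉₊ + 1 : ℕ) ≤ N := le_trans (le_max_right _ _) hN
  have hcl : ((2:ℝ)^((1:ℝ)/β)) < (N:ℝ) := by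
    calc (2:ℝ)^((1:ℝ)/β) ≤ (⌈(2:ℝ)^((1:ℝ)/β)⌉₊ : ℝ) := Nat.le_ceil _
      _ < (N:ℝ) := by exact_mod_cast Nat.lt_of_lt_of_le (Nat.lt_succ_self _) hceil
  have h2pow : ((2:ℝ)^((1:ℝ)/β))^β = 2 := by
    rw [← Real.rpow_mul (by norm_num), one_div_mul_cancel hβ.ne', Real.rpow_one]
  have h2 : (2:ℝ) ≤ (N:ℝ)^β := by
    have h2p : (0:ℝ) ≤ (2:ℝ)^((1:ℝ)/β) := (Real.rpow_pos_of_pos (by norm_num) _).le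
    have := Real.rpow_lt_rpow h2p hcl hβ
    rw [h2pow] at this
    exact this.le
  have hM2 : 2 ≤ ⌊(N : ℝ) ^ β⌋₊ := Nat.le_floor (by exact_mod_cast h2)
  have hp : (0:ℝ) < 1/(N:ℝ) := by positivity
  have hp1 : 1/(N:ℝ) < 1 := by rw [div_lt_one hNpos]; linarith
  have hvec : ∀ (k : ℕ) (s : Fin ⌊(N : ℝ) ^ β⌋₊),
      (μ₀ ᵥ* (urnMat ⌊(N : ℝ) ^ β⌋₊ ε ^ (k+1))) s
      = ∑ i, μ₀ i * (urnMat ⌊(N : ℝ) ^ β⌋₊ ε ^ (k+1)) i s := by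
    intro k s; simp [Matrix.vecMul, dotProduct]
  have hmain := urn_main hM2 hε hp hp1 μ₀ hμ0 hμ1
  have heq : ∀ s : Fin ⌊(N : ℝ) ^ β⌋₊,
      (∑' k : ℕ, (1 - 1/(N:ℝ)) ^ k * (1/(N:ℝ)) * (μ₀ ᵥ* (urnMat ⌊(N : ℝ) ^ β⌋₊ ε ^ (k + 1))) s)
      = ∑' k : ℕ, (1 - 1/(N:ℝ)) ^ k * (1/(N:ℝ)) * (∑ i, μ₀ i * (urnMat ⌊(N : ℝ) ^ β⌋₊ ε ^ (k+1)) i s) :=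
    fun s => tsum_congr fun k => by rw [hvec k s]
  have hfloor : ((⌊(N : ℝ) ^ β⌋₊ : ℕ):ℝ) ≤ (N:ℝ)^β := Nat.floor_le (Real.rpow_nonneg hNpos.le β)
  have hfinal : 4 * ((⌊(N : ℝ) ^ β⌋₊ : ℕ):ℝ) * (1/(N:ℝ)) ≤ 2 * ((N:ℝ)^(-(β + 1/4))) := by
    have step1 : 4 * ((⌊(N : ℝ) ^ β⌋₊ : ℕ):ℝ) * (1/(N:ℝ)) ≤ 4 * (N:ℝ)^β * (1/(N:ℝ)) := by
      have := mul_le_mul_of_nonneg_right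
        (mul_le_mul_of_nonneg_left hfloor (by norm_num : (0:ℝ) ≤ 4)) hp.le
      linarith
    have hrw : (N:ℝ)^β * (1/(N:ℝ)) = (N:ℝ)^(β - 1) := by
      rw [Real.rpow_sub hNpos, Real.rpow_one]
      ring
    have h24 : (2:ℝ) ≤ (N:ℝ)^((3:ℝ)/4 - 2*β) := by
      calc (2:ℝ) = (16:ℝ)^((1:ℝ)/4) := by
            rw [show (16:ℝ) = 2^(4:ℕ) by norm_num, ← Real.rpow_natCast 2 4,
              ← Real.rpow_mul (by norm_num)]
            norm_num
        _ ≤ (N:ℝ)^((1:ℝ)/4) := Real.rpow_le_rpow (by norm_num) hN16' (by norm_num)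
        _ ≤ (N:ℝ)^((3:ℝ)/4 - 2*β) := Real.rpow_le_rpow_of_exponent_le hN1.le (by linarith)
    have hsplit : (N:ℝ)^(-(β + 1/4)) = (N:ℝ)^(β - 1) * (N:ℝ)^((3:ℝ)/4 - 2*β) := by
      rw [← Real.rpow_add hNpos]
      congr 1
      ring
    have hpow_pos : (0:ℝ) < (N:ℝ)^(β - 1) := Real.rpow_pos_of_pos hNpos _
    calc 4 * ((⌊(N : ℝ) ^ β⌋₊ : ℕ):ℝ) * (1/(N:ℝ)) ≤ 4 * (N:ℝ)^β * (1/(N:ℝ)) := step1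
      _ = 4 * ((N:ℝ)^β * (1/(N:ℝ))) := by ring
      _ = 4 * (N:ℝ)^(β - 1) := by rw [hrw]
      _ ≤ 2 * ((N:ℝ)^(β - 1) * (N:ℝ)^((3:ℝ)/4 - 2*β)) := by nlinarith
      _ = 2 * ((N:ℝ)^(-(β + 1/4))) := by rw [hsplit]
  have hsum_eq : ∑ s, |(fun s => ∑' k : ℕ,
        (1 - 1 / (N : ℝ)) ^ k * (1 / (N : ℝ)) *
          (μ₀ ᵥ* (urnMat ⌊(N : ℝ) ^ β⌋₊ ε) ^ (k + 1)) s) s - urnNu ⌊(N : ℝ) ^ β⌋₊ ε s|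
      = ∑ s, |(∑' k : ℕ, (1 - 1/(N:ℝ)) ^ k * (1/(N:ℝ)) *
          (∑ i, μ₀ i * (urnMat ⌊(N : ℝ) ^ β⌋₊ ε ^ (k+1)) i s)) - urnNu ⌊(N : ℝ) ^ β⌋₊ ε s| := by
    apply Finset.sum_congr rfl
    intro s _
    exact congrArg (fun x => |x - urnNu ⌊(N : ℝ) ^ β⌋₊ ε s|) (heq s)
  unfold tvDist
  rw [hsum_eq, div_le_iff₀ (by norm_num : (0:ℝ) < 2)]
  calc ∑ s, |(∑' k : ℕ, (1 - 1/(N:ℝ)) ^ k * (1/(N:ℝ)) *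
          (∑ i, μ₀ i * (urnMat ⌊(N : ℝ) ^ β⌋₊ ε ^ (k+1)) i s)) - urnNu ⌊(N : ℝ) ^ β⌋₊ ε s|
      ≤ 4 * ((⌊(N : ℝ) ^ β⌋₊ : ℕ):ℝ) * (1/(N:ℝ)) := hmain
    _ ≤ 2 * ((N:ℝ)^(-(β + 1/4))) := hfinal
    _ = (N:ℝ)^(-(β + 1/4)) * 2 := by ring
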